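/- For every bit vector a ∈ {0,1}ⁿ, every integer k with 1 ≤ k ≤ n, and every coordinate index i with 1 ≤ i ≤ k, the image of the chain region R_{a,k} under the projection onto the i-th coordinate is exactly the open interval ( ∑_{j=1}^{i} a_j s_j − i/(2n) , ∑_{j=1}^{i} a_j s_j + i/(2n) ). -/

import Mathlib

open MeasureTheory
open scoped ENNReal

noncomputable section

/-- The chain region `R_{a,k} ⊆ ℝᵏ` : the set of points `(x₁,…,x_k)` with
`a₁s₁ − 1/(2n) < x₁ < a₁s₁ + 1/(2n)` and, for `2 ≤ i ≤ k`,
`x_{i−1} + a_i s_i − 1/(2n) < x_i < x_{i−1} + a_i s_i + 1/(2n)`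
(indices here are 0-based). -/
def chainRegion (n k : ℕ) (hk : k ≤ n) (s : Fin n → ℕ) (a : Fin n → Bool) :
    Set (Fin k → ℝ) :=
  {x | ∀ i : Fin k,
    (if 0 < (i : ℕ) then x ⟨(i : ℕ) - 1, Nat.lt_of_le_of_lt (Nat.sub_le _ _) i.isLt⟩ else 0) +
        (if a (Fin.castLE hk i) then (s (Fin.castLE hk i) : ℝ) else 0) - 1 / (2 * (n : ℝ))
      < x i ∧
    x i <
      (if 0 < (i : ℕ) then x ⟨(i : ℕ) - 1, Nat.lt_of_le_of_lt (Nat.sub_le _ _) i.isLt⟩ else 0) +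
        (if a (Fin.castLE hk i) then (s (Fin.castLE hk i) : ℝ) else 0) + 1 / (2 * (n : ℝ))}

/-- for every bit vector `a ∈ {0,1}ⁿ`, every `1 ≤ k ≤ n` and every coordinate
`i` (0-based index, so the paper's `i`-th coordinate with radius `i/(2n)` becomes radius
`((i:ℕ)+1)/(2n)` here), the image of the chain region `R_{a,k}` under the projection onto
the `i`-th coordinate is exactly the open interval
`(∑_{j ≤ i} a_j s_j − (i+1)/(2n), ∑_{j ≤ i} a_j s_j + (i+1)/(2n))`. -/
theorem chainRegion_proj (n : ℕ) (hn : 0 < n) (s : Fin n → ℕ) (hs : ∀ i, 0 < s i)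
    (a : Fin n → Bool) (k : ℕ) (hk1 : 1 ≤ k) (hk : k ≤ n) (i : Fin k) :
    (fun x : Fin k → ℝ => x i) '' chainRegion n k hk s a =
      Set.Ioo
        ((∑ j ∈ Finset.Iic i, if a (Fin.castLE hk j) then (s (Fin.castLE hk j) : ℝ) else 0)
          - ((i : ℕ) + 1) / (2 * (n : ℝ)))
        ((∑ j ∈ Finset.Iic i, if a (Fin.castLE hk j) then (s (Fin.castLE hk j) : ℝ) else 0)
          + ((i : ℕ) + 1) / (2 * (n : ℝ))) := by
  have hnR : (0:ℝ) < n := by exact_mod_cast hn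
  set ε : ℝ := 1 / (2 * (n : ℝ)) with hε_def
  have hε : 0 < ε := by positivity
  set c : ℕ → ℝ := fun m =>
    if h : m < k then (if a (Fin.castLE hk ⟨m, h⟩) then (s (Fin.castLE hk ⟨m, h⟩) : ℝ) else 0)
    else 0 with hc_def
  set S : ℕ → ℝ := fun m => ∑ l ∈ Finset.range m, c l with hS_def
  have hc : ∀ j : Fin k,
      (if a (Fin.castLE hk j) then (s (Fin.castLE hk j) : ℝ) else 0) = c (j : ℕ) := by
    intro j
    simp only [hc_def, j.isLt, dif_pos, Fin.eta]
  have hSsucc : ∀ m : ℕ, S (m + 1) = S m + c m := fun m => Finset.sum_range_succ c m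
  have hsum : (∑ j ∈ Finset.Iic i, if a (Fin.castLE hk j) then (s (Fin.castLE hk j) : ℝ) else 0)
      = S ((i : ℕ) + 1) := by
    calc ∑ j ∈ Finset.Iic i, (if a (Fin.castLE hk j) then (s (Fin.castLE hk j) : ℝ) else 0)
        = ∑ j ∈ Finset.Iic i, c (j : ℕ) := Finset.sum_congr rfl fun j _ => hc j
      _ = ∑ m ∈ Finset.Iic (i : ℕ), c m := by
          rw [← Fin.map_valEmbedding_Iic, Finset.sum_map]; rfl
      _ = S ((i : ℕ) + 1) := by
          rw [hS_def]
          congr 1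
          ext m
          simp [Nat.lt_succ_iff]
  rw [hsum]
  ext y
  simp only [Set.mem_image, Set.mem_Ioo]
  constructor
  · rintro ⟨x, hx, rfl⟩
    -- forward direction: induction
    have key : ∀ m : ℕ, ∀ h : m < k,
        S (m + 1) - (m + 1) * ε < x ⟨m, h⟩ ∧ x ⟨m, h⟩ < S (m + 1) + (m + 1) * ε := by
      intro m
      induction m with
      | zero =>
        intro h
        have := hx ⟨0, h⟩
        simp only [chainRegion, Set.mem_setOf_eq] at this
        obtain ⟨h1, h2⟩ := this
        rw [if_neg (by simp), hc ⟨0, h⟩] at h1 h2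
        simp only [hSsucc 0]
        have hS0 : S 0 = 0 := by simp [hS_def]
        rw [hS0]
        constructor <;> [push_cast; push_cast] <;> linarith
      | succ m ih =>
        intro h
        have hm : m < k := Nat.lt_of_succ_lt h
        obtain ⟨ih1, ih2⟩ := ih hm
        have := hx ⟨m + 1, h⟩
        simp only [chainRegion, Set.mem_setOf_eq] at this
        obtain ⟨h1, h2⟩ := this
        rw [if_pos (by simp), hc ⟨m + 1, h⟩] at h1 h2
        simp only [Nat.add_sub_cancel] at h1 h2
        rw [hSsucc (m + 1)]
        push_cast
        constructor <;> linarith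
    obtain ⟨h1, h2⟩ := key (i : ℕ) i.isLt
    simp only [Fin.eta] at h1 h2
    have : ((i : ℕ) + 1 : ℝ) / (2 * (n : ℝ)) = ((i : ℕ) + 1) * ε := by
      rw [hε_def]; ring
    rw [this]
    exact ⟨h1, h2⟩
  · rintro ⟨hy1, hy2⟩
    have hiR : (0:ℝ) < (i : ℕ) + 1 := by positivity
    set t : ℝ := (y - S ((i : ℕ) + 1)) / ((i : ℕ) + 1) with ht_def
    have htlt : -ε < t ∧ t < ε := by
      constructor
      · rw [ht_def, lt_div_iff₀ hiR]
        have : ((i : ℕ) + 1 : ℝ) / (2 * (n : ℝ)) = ((i : ℕ) + 1) * ε := by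
          rw [hε_def]; ring
        rw [this] at hy1
        nlinarith
      · rw [ht_def, div_lt_iff₀ hiR]
        have : ((i : ℕ) + 1 : ℝ) / (2 * (n : ℝ)) = ((i : ℕ) + 1) * ε := by
          rw [hε_def]; ring
        rw [this] at hy2
        nlinarith
    refine ⟨fun j => S ((j : ℕ) + 1) + t * ((min (j : ℕ) (i : ℕ) : ℕ) + 1), ?_, ?_⟩
    · intro j
      by_cases hj : 0 < (j : ℕ)
      · rw [if_pos hj, hc j]
        simp only []
        have hprev : (⟨(j : ℕ) - 1, Nat.lt_of_le_of_lt (Nat.sub_le _ _) j.isLt⟩ : Fin k).val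
            = (j : ℕ) - 1 := rfl
        have hs1 : ((j : ℕ) - 1) + 1 = (j : ℕ) := Nat.succ_pred_eq_of_pos hj
        have hSj : S ((j : ℕ) + 1) = S (((j : ℕ) - 1) + 1) + c (j : ℕ) := by
          rw [hs1, hSsucc]
        have hmin : min ((j : ℕ)) (i : ℕ) = min ((j : ℕ) - 1) (i : ℕ) ∨
            min ((j : ℕ)) (i : ℕ) = min ((j : ℕ) - 1) (i : ℕ) + 1 := by omega
        rw [hSj]
        rcases hmin with hm | hm <;> rw [hm] <;> push_cast <;>
          constructor <;> nlinarith [htlt.1, htlt.2]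
      · rw [if_neg hj, hc j]
        have hj0 : (j : ℕ) = 0 := by omega
        simp only [hj0]
        have : S (0 + 1) = c 0 := by rw [hSsucc]; simp [hS_def]
        rw [this]
        simp only [Nat.zero_min]
        push_cast
        constructor <;> nlinarith [htlt.1, htlt.2]
    · simp only [min_self]
      rw [ht_def]
      field_simp
      ring
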